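/- Let W be a committee of size k (with k ≥ 1) and let X ⊆ N be a set of voters with |X| ≥ n/k such that no candidate of W is approved by any voter in X (i.e., W ∩ (⋃_{i∈X} A_i) = ∅). Then there exists a candidate w ∈ W with MC(w,W) ≤ n/k − n/k². -/

import Mathlib

open Finset

noncomputable def Hval (p : ℕ) : ℝ := ∑ j ∈ Finset.range p, (1 : ℝ) / (j + 1)

noncomputable def pavScore {C : Type*} [DecidableEq C] {n : ℕ}
    (A : Fin n → Finset C) (W : Finset C) : ℝ :=
  ∑ i, Hval ((W ∩ A i).card)

noncomputable def mc {C : Type*} [DecidableEq C] {n : ℕ}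
    (A : Fin n → Finset C) (w : C) (W : Finset C) : ℝ :=
  pavScore A W - pavScore A (W.erase w)

lemma Hval_succ (m : ℕ) : Hval (m + 1) = Hval m + 1 / (m + 1) := by
  simp [Hval, Finset.sum_range_succ]

lemma sumInnerAux {C : Type*} [DecidableEq C] (W S : Finset C) (hS : S ⊆ W) :
    ∑ w ∈ W, (Hval S.card - Hval ((S.erase w).card))
      = if S.card = 0 then (0 : ℝ) else 1 := by
  rw [← Finset.sum_subset hS]
  · rcases Nat.eq_zero_or_pos S.card with h0 | hpos
    · simp [Finset.card_eq_zero.mp h0]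
    · obtain ⟨m, hm⟩ : ∃ m, S.card = m + 1 := ⟨S.card - 1, by omega⟩
      have : ∀ w ∈ S, Hval S.card - Hval ((S.erase w).card) = 1 / (m + 1) := by
        intro w hw
        rw [Finset.card_erase_of_mem hw, hm]
        simp [Hval_succ]
      rw [Finset.sum_congr rfl this, Finset.sum_const, hm]
      have : ((m : ℝ) + 1) ≠ 0 := by positivity
      simp only [nsmul_eq_mul]
      field_simp
      simp
  · intro w _ hw
    rw [Finset.erase_eq_of_notMem hw]
    simp

theorem stmt16 {C : Type*} [DecidableEq C] {n k : ℕ}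
    (A : Fin n → Finset C) (W : Finset C)
    (hk : 1 ≤ k) (hW : W.card = k)
    (X : Finset (Fin n)) (hX : (n : ℝ) / k ≤ (X.card : ℝ))
    (hdisj : W ∩ X.biUnion A = ∅) :
    ∃ w ∈ W, mc A w W ≤ (n : ℝ) / k - (n : ℝ) / (k : ℝ) ^ 2 := by
  have hWne : W.Nonempty := Finset.card_pos.mp (by omega)
  have hk0 : (0 : ℝ) < k := by exact_mod_cast hk
  -- rewrite mc as a sum over voters
  have hmc : ∀ w ∈ W, mc A w W
      = ∑ i, (Hval ((W ∩ A i).card) - Hval (((W ∩ A i).erase w).card)) := by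
    intro w hw
    unfold mc pavScore
    rw [← Finset.sum_sub_distrib]
    refine Finset.sum_congr rfl fun i _ => ?_
    rw [Finset.erase_inter]
  -- total sum bound
  have hsum : ∑ w ∈ W, mc A w W ≤ (n : ℝ) - X.card := by
    rw [Finset.sum_congr rfl hmc, Finset.sum_comm]
    have hcongr : ∀ i : Fin n, ∑ w ∈ W,
        (Hval ((W ∩ A i).card) - Hval (((W ∩ A i).erase w).card))
        = if (W ∩ A i).card = 0 then (0 : ℝ) else 1 := fun i =>
      sumInnerAux W (W ∩ A i) Finset.inter_subset_left
    rw [Finset.sum_congr rfl fun i _ => hcongr i]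
    -- terms for i ∈ X vanish
    have hXzero : ∀ i ∈ X, (W ∩ A i).card = 0 := by
      intro i hi
      rw [Finset.card_eq_zero, ← Finset.subset_empty, ← hdisj]
      exact Finset.inter_subset_inter_left (Finset.subset_biUnion_of_mem A hi)
    have hXsub : X ⊆ Finset.univ := Finset.subset_univ X
    rw [← Finset.sum_sdiff hXsub]
    have h2 : ∑ i ∈ X, (if (W ∩ A i).card = 0 then (0 : ℝ) else 1) = 0 := by
      refine Finset.sum_eq_zero fun i hi => ?_
      simp [hXzero i hi]
    rw [h2, add_zero]
    calc ∑ i ∈ Finset.univ \ X, (if (W ∩ A i).card = 0 then (0 : ℝ) else 1)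
        ≤ ∑ _i ∈ Finset.univ \ X, (1 : ℝ) := by
          refine Finset.sum_le_sum fun i _ => ?_
          split <;> norm_num
      _ = ((Finset.univ \ X).card : ℝ) := by simp
      _ = (n : ℝ) - X.card := by
          rw [Finset.card_sdiff_of_subset hXsub]
          have : X.card ≤ n := by simpa using Finset.card_le_card hXsub
          simp [Nat.cast_sub this]
  -- pick the minimal element
  have havg : ∑ w ∈ W, mc A w W ≤ ∑ _w ∈ W, ((n : ℝ) - X.card) / k := by
    rw [Finset.sum_const, hW, nsmul_eq_mul]
    rw [mul_div_assoc']
    rw [mul_comm, mul_div_assoc, div_self (ne_of_gt hk0), mul_one]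
    exact hsum
  obtain ⟨w, hw, hle⟩ := Finset.exists_le_of_sum_le hWne havg
  refine ⟨w, hw, hle.trans ?_⟩
  have h1 : (n : ℝ) - X.card ≤ (n : ℝ) - (n : ℝ) / k := by linarith
  have h2 : ((n : ℝ) - (n : ℝ) / k) / k = (n : ℝ) / k - (n : ℝ) / (k : ℝ) ^ 2 := by
    field_simp
  rw [← h2]
  gcongr
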